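/- Let m and n be odd positive integers. Then there are no integers a, b with (2m)ⁿ = a² + b² − ab. -/
import Mathlib

lemma zmod2_aux : ∀ a b : ZMod 2, a^2 + b^2 - a*b = 0 → a = 0 ∧ b = 0 := by decide

lemma key : ∀ k : ℕ, Odd k → ∀ c a b : ℤ, Odd c → 2^k * c ≠ a^2 + b^2 - a*b := by
  intro k
  induction k using Nat.strong_induction_on with
  | _ k ih =>
    intro hk c a b hc heq
    -- mod 2: a and b are even
    have hk0 : k ≠ 0 := by rintro rfl; exact (Nat.not_odd_iff_even.mpr Even.zero) hk
    have hcast : (a : ZMod 2)^2 + (b : ZMod 2)^2 - (a : ZMod 2) * b = 0 := by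
      have := congrArg (Int.cast : ℤ → ZMod 2) heq
      push_cast at this
      rw [← this, show (2:ZMod 2) = 0 from by decide, zero_pow hk0, zero_mul]
    obtain ⟨ha, hb⟩ := zmod2_aux _ _ hcast
    obtain ⟨x, rfl⟩ := (ZMod.intCast_zmod_eq_zero_iff_dvd a 2).mp ha
    obtain ⟨y, rfl⟩ := (ZMod.intCast_zmod_eq_zero_iff_dvd b 2).mp hb
    have heq4 : 2^k * c = 4 * (x^2 + y^2 - x*y) := by ring_nf; ring_nf at heq; linarith
    rcases Nat.lt_or_ge k 2 with h2 | h2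
    · -- k = 1
      interval_cases k
      · exact absurd hk (by decide)
      · have : c = 2 * (x^2 + y^2 - x*y) := by linarith
        obtain ⟨d, hd⟩ := hc
        omega
    · -- k ≥ 2, descend
      have hk2 : Odd (k - 2) := by
        obtain ⟨j, hj⟩ := hk
        exact ⟨j - 1, by omega⟩
      have hpow : (2:ℤ)^k = 4 * 2^(k-2) := by
        rw [show k = (k-2) + 2 by omega, pow_add]; ring_nf; rw [show 2 + (k-2) - 2 = k - 2 from by omega]
      have heq2 : 2^(k-2) * c = x^2 + y^2 - x*y := by
        rw [hpow] at heq4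
        linarith
      exact ih (k - 2) (by omega) hk2 c x y hc heq2

theorem stmt_4 (m n : ℕ) (hm : Odd m) (hn : Odd n) (hm1 : 1 ≤ m) :
    ¬ ∃ a b : ℤ, ((2 * m : ℤ)) ^ n = a ^ 2 + b ^ 2 - a * b := by
  rintro ⟨a, b, heq⟩
  have hodd : Odd ((m : ℤ) ^ n) := by
    exact_mod_cast (hm.pow : Odd (m ^ n))
  refine key n hn ((m:ℤ)^n) a b hodd ?_
  rw [← heq, mul_pow]
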